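/- arXiv:2201.12842 — 5 statements merged into one kernel-verified Lean document; each statement's English description precedes it below -/
import Mathlib

section
/- Define v^A_γ(t_1,...,t_N) = Σ_{α_1,...,α_N ≥ 0, Σ_{k=1}^N (N+2-k)α_k = N+2-γ} ((|α|+γ-2)!/(γ-1)!) Π_{k=1}^N t_k^{α_k}/α_k!, where |α| = Σα_k. Then the t_0-derivative of the A_N open potential satisfies ∂F^o_{A_N}/∂t_0 = t_0^{N+1}/(N+1) + Σ_{k=1}^N t_0^{k-1} v^A_k(t_1,...,t_N). -/
open MvPolynomial Finsupp

/-- `F` is the genus-zero open potential of type `A_N`, characterized by its iterated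
partial derivatives at `0`. -/
def OpenAPotential (N : ℕ) (F : MvPolynomial (Fin (N + 1)) ℚ) : Prop :=
  ∀ (m k : ℕ) (α : Fin m → Fin (N + 1)), (∀ i, α i ≠ 0) →
    MvPolynomial.eval (fun _ => (0 : ℚ))
      ((List.ofFn α ++ List.replicate k (0 : Fin (N + 1))).foldr
        (fun i p => MvPolynomial.pderiv i p) F)
    = if (∑ i, (N + 2 - (α i : ℕ))) + k = N + 2 then ((m + k - 2).factorial : ℚ) else 0

/-- The polynomial `v^A_γ(t_1,…,t_N) = ∑_{α : ∑ (N+2-k) α_k = N+2-γ}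
((|α|+γ-2)!/(γ-1)!) ∏ t_k^{α_k}/α_k!` (the variable `t_0` is not used,
i.e. multi-indices have `α_0 = 0`). -/
noncomputable def vA (N γ : ℕ) : MvPolynomial (Fin (N + 1)) ℚ :=
  ∑ a ∈ Finset.filter
      (fun a : Fin (N + 1) → ℕ => a 0 = 0 ∧ ∑ i : Fin (N + 1), (N + 2 - (i : ℕ)) * a i = N + 2 - γ)
      (Fintype.piFinset fun _ : Fin (N + 1) => Finset.range (N + 3)),
    MvPolynomial.C ((((∑ i, a i) + γ - 2).factorial : ℚ) / ((γ - 1).factorial : ℚ) /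
        ∏ i, ((a i).factorial : ℚ)) *
      ∏ i, MvPolynomial.X i ^ a i

lemma coeff_pderiv' {σ : Type*} [DecidableEq σ] (i : σ) (P : MvPolynomial σ ℚ) (m : σ →₀ ℕ) :
    coeff m (pderiv i P) = ((m i : ℚ) + 1) * coeff (m + Finsupp.single i 1) P := by
  induction P using MvPolynomial.induction_on' with
  | add p q hp hq => simp [hp, hq, mul_add]
  | monomial s c =>
    rw [pderiv_monomial, coeff_monomial, coeff_monomial]
    by_cases h : Finsupp.single i 1 ≤ s
    · by_cases hs : s = m + Finsupp.single i 1
      · have h1 : s - Finsupp.single i 1 = m := by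
          rw [hs]; simp
        have h2 : s i = m i + 1 := by
          rw [hs]; simp
        rw [if_pos h1, if_pos hs, h2]
        push_cast
        ring
      · have h1 : s - Finsupp.single i 1 ≠ m := by
          intro hh
          exact hs (by rw [← hh, tsub_add_cancel_of_le h])
        rw [if_neg h1, if_neg hs, mul_zero]
    · have hsi : s i = 0 := by
        rw [Finsupp.single_le_iff] at h
        omega
      have h2 : s ≠ m + Finsupp.single i 1 := by
        intro hh
        have := congrArg (fun f => f i) hh
        simp [hsi] at this
      rw [if_neg h2, mul_zero, hsi]
      simp

lemma prod_fact_add_single {σ : Type*} [Fintype σ] [DecidableEq σ] (m : σ →₀ ℕ) (a : σ) :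
    (∏ i, ((((m + Finsupp.single a 1) : σ →₀ ℕ) i).factorial : ℚ))
      = ((m a : ℚ) + 1) * ∏ i, ((m i).factorial : ℚ) := by
  rw [← Finset.mul_prod_erase Finset.univ
      (fun i => ((((m + Finsupp.single a 1) : σ →₀ ℕ) i).factorial : ℚ)) (Finset.mem_univ a),
    ← Finset.mul_prod_erase Finset.univ (fun i => ((m i).factorial : ℚ)) (Finset.mem_univ a)]
  have h1 : ((m + Finsupp.single a 1) : σ →₀ ℕ) a = m a + 1 := by simp
  have h2 : ∀ i ∈ Finset.univ.erase a,
      ((((m + Finsupp.single a 1) : σ →₀ ℕ) i).factorial : ℚ) = ((m i).factorial : ℚ) := by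
    intro i hi
    have : i ≠ a := (Finset.mem_erase.mp hi).1
    simp [Finsupp.single_apply, Ne.symm this]
  rw [Finset.prod_congr rfl h2, h1, Nat.factorial_succ]
  push_cast
  ring

noncomputable def Dlist {σ : Type*} [DecidableEq σ] (L : List σ) : σ →₀ ℕ :=
  (L.map fun a => Finsupp.single a 1).sum

@[simp] lemma Dlist_nil {σ : Type*} [DecidableEq σ] : Dlist ([] : List σ) = 0 := rfl

@[simp] lemma Dlist_cons {σ : Type*} [DecidableEq σ] (a : σ) (L : List σ) :
    Dlist (a :: L) = Finsupp.single a 1 + Dlist L := by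
  simp [Dlist]

lemma Dlist_apply {σ : Type*} [DecidableEq σ] (L : List σ) (i : σ) :
    Dlist L i = L.count i := by
  induction L with
  | nil => simp [Dlist]
  | cons a L ih =>
    simp only [Dlist_cons, Finsupp.add_apply, ih, List.count_cons, Finsupp.single_apply]
    rcases eq_or_ne a i with h | h
    · simp [h, Nat.add_comm]
    · simp [h, Ne.symm h]

lemma foldr_key {σ : Type*} [Fintype σ] [DecidableEq σ] (L : List σ) (P : MvPolynomial σ ℚ)
    (m : σ →₀ ℕ) :
    (∏ i, (((m + Dlist L) i).factorial : ℚ)) * coeff (m + Dlist L) P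
      = (∏ i, ((m i).factorial : ℚ)) * coeff m (L.foldr (fun i p => pderiv i p) P) := by
  induction L generalizing m with
  | nil => simp [Dlist]
  | cons a L ih =>
    rw [List.foldr_cons, coeff_pderiv']
    have hD : m + Dlist (a :: L) = m + Finsupp.single a 1 + Dlist L := by
      rw [Dlist_cons, ← add_assoc]
    rw [hD, ih (m + Finsupp.single a 1), prod_fact_add_single]
    ring

lemma coeff_F_eq (N : ℕ) (F : MvPolynomial (Fin (N+1)) ℚ) (hF : OpenAPotential N F)
    (d : Fin (N+1) →₀ ℕ) :
    (∏ i, ((d i).factorial : ℚ)) * coeff d F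
      = if (∑ i : Fin (N+1), (N + 2 - (i:ℕ)) * (Finsupp.erase 0 d) i) + d 0 = N + 2
        then (((∑ i, d i) - 2).factorial : ℚ) else 0 := by
  set e := Finsupp.erase 0 d with he
  set l := e.toMultiset.toList with hl
  have hcount : ∀ i, l.count i = e i := fun i => by
    rw [hl, ← Multiset.coe_count, Multiset.coe_toList, Finsupp.count_toMultiset]
  have h0l : (0 : Fin (N+1)) ∉ l := by
    rw [← List.count_eq_zero, hcount, he, Finsupp.erase_same]
  have hα : ∀ j : Fin l.length, l.get j ≠ 0 := fun j h => h0l (h ▸ List.get_mem l j)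
  have hhF := hF l.length (d 0) (fun j => l.get j) hα
  rw [List.ofFn_get] at hhF
  -- identify the eval with the coefficient
  have hkey := foldr_key (l ++ List.replicate (d 0) 0) F 0
  have hD : Dlist (l ++ List.replicate (d 0) 0) = d := by
    ext i
    rw [Dlist_apply, List.count_append, hcount]
    rcases eq_or_ne i 0 with h | h
    · subst h
      simp [he, Finsupp.erase_same, List.count_replicate]
    · simp [he, Finsupp.erase_ne h, List.count_replicate, h, Ne.symm h]
  rw [hD, zero_add] at hkey
  simp only [Finsupp.coe_zero, Pi.zero_apply, Nat.factorial_zero, Nat.cast_one,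
    Finset.prod_const_one, one_mul] at hkey
  have heval : MvPolynomial.eval (fun _ => (0:ℚ))
      ((l ++ List.replicate (d 0) 0).foldr (fun i p => MvPolynomial.pderiv i p) F)
      = coeff 0 ((l ++ List.replicate (d 0) 0).foldr (fun i p => MvPolynomial.pderiv i p) F) := by
    rw [MvPolynomial.eval_zero', MvPolynomial.constantCoeff_eq]
  rw [heval] at hhF
  -- now identify the sums and lengths
  have hsum : (∑ j : Fin l.length, (N + 2 - ((l.get j : Fin (N+1)) : ℕ)))
      = ∑ i : Fin (N+1), (N + 2 - (i:ℕ)) * e i := by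
    have h1 : (∑ j : Fin l.length, (N + 2 - ((l.get j : Fin (N+1)) : ℕ)))
        = (l.map (fun a : Fin (N+1) => N + 2 - (a:ℕ))).sum := by
      rw [← Fin.sum_univ_fun_getElem]
      simp
    have h2 : (l.map (fun a : Fin (N+1) => N + 2 - (a:ℕ))).sum
        = ((e.toMultiset.map (fun a : Fin (N+1) => N + 2 - (a:ℕ)))).sum := by
      rw [← Multiset.sum_coe, ← Multiset.map_coe, hl, Multiset.coe_toList]
    rw [h1, h2, Finset.sum_multiset_map_count]
    rw [Finsupp.toFinset_toMultiset]
    have h3 : ∑ m ∈ e.support, (Multiset.count m e.toMultiset) • (N + 2 - (m:ℕ))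
        = ∑ m ∈ e.support, (N + 2 - (m:ℕ)) * e m :=
      Finset.sum_congr rfl fun i _ => by rw [Finsupp.count_toMultiset, smul_eq_mul, mul_comm]
    rw [h3]
    exact Finset.sum_subset (Finset.subset_univ _) (fun x _ hx => by
      rw [Finsupp.notMem_support_iff] at hx; simp [hx])
  have hlen : l.length + d 0 = ∑ i, d i := by
    have h1 : l.length = ∑ i, e i := by
      rw [hl, Multiset.length_toList, Finsupp.card_toMultiset, Finsupp.sum]
      refine Finset.sum_subset (Finset.subset_univ e.support) ?_
      intro x _ hx
      rw [Finsupp.notMem_support_iff] at hx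
      exact hx
    have h2 : ∑ i, d i = d 0 + ∑ i, e i := by
      rw [← Finset.add_sum_erase Finset.univ d (Finset.mem_univ 0)]
      congr 1
      rw [← Finset.add_sum_erase Finset.univ e (Finset.mem_univ 0), he, Finsupp.erase_same,
        zero_add]
      exact Finset.sum_congr rfl fun i hi => (Finsupp.erase_ne (Finset.mem_erase.mp hi).1).symm
    omega
  rw [hkey, hhF]
  simp only [hsum, hlen]

lemma coeff_vA (N k : ℕ) (e : Fin (N+1) →₀ ℕ) :
    coeff e (vA N k)
      = if ((∀ i, e i < N + 3) ∧ e 0 = 0 ∧ ∑ i : Fin (N+1), (N + 2 - (i:ℕ)) * e i = N + 2 - k)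
        then (((∑ i : Fin (N+1), e i) + k - 2).factorial : ℚ) / (((k-1).factorial : ℚ))
          / ∏ i, ((e i).factorial : ℚ) else 0 := by
  classical
  rw [vA, coeff_sum]
  have hmono : ∀ a : Fin (N+1) → ℕ, (∏ i, (X i : MvPolynomial (Fin (N+1)) ℚ) ^ a i)
      = monomial (Finsupp.equivFunOnFinite.symm a) 1 := by
    intro a
    have h1 : ∏ i, (X i : MvPolynomial (Fin (N+1)) ℚ) ^ a i
        = ∏ i, (X i : MvPolynomial (Fin (N+1)) ℚ) ^ (Finsupp.equivFunOnFinite.symm a) i :=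
      Finset.prod_congr rfl fun i _ => by simp
    rw [h1, ← prod_X_pow_eq_monomial]
    exact (Finset.prod_subset (Finset.subset_univ _) fun x _ hx => by
      rw [Finsupp.notMem_support_iff] at hx; rw [hx, pow_zero]).symm
  have hstep : ∀ a ∈ Finset.filter
      (fun a : Fin (N + 1) → ℕ => a 0 = 0 ∧ ∑ i : Fin (N + 1), (N + 2 - (i : ℕ)) * a i = N + 2 - k)
      (Fintype.piFinset fun _ : Fin (N + 1) => Finset.range (N + 3)),
      coeff e (MvPolynomial.C ((((∑ i, a i) + k - 2).factorial : ℚ) / ((k - 1).factorial : ℚ) /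
        ∏ i, ((a i).factorial : ℚ)) * ∏ i, MvPolynomial.X i ^ a i)
      = if a = ⇑e then ((((∑ i, a i) + k - 2).factorial : ℚ) / ((k - 1).factorial : ℚ) /
        ∏ i, ((a i).factorial : ℚ)) else 0 := by
    intro a _
    rw [hmono a, coeff_C_mul, coeff_monomial]
    by_cases h : a = ⇑e
    · subst h
      simp [Finsupp.equivFunOnFinite_symm_coe]
    · rw [if_neg h, if_neg, mul_zero]
      intro hh
      exact h (by rw [← hh]; ext i; simp)
  rw [Finset.sum_congr rfl hstep, Finset.sum_ite_eq']
  have hiff : (⇑e ∈ Finset.filter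
      (fun a : Fin (N + 1) → ℕ => a 0 = 0 ∧ ∑ i : Fin (N + 1), (N + 2 - (i : ℕ)) * a i = N + 2 - k)
      (Fintype.piFinset fun _ : Fin (N + 1) => Finset.range (N + 3)))
      ↔ ((∀ i, e i < N + 3) ∧ e 0 = 0 ∧ ∑ i : Fin (N+1), (N + 2 - (i:ℕ)) * e i = N + 2 - k) := by
    simp only [Finset.mem_filter, Fintype.mem_piFinset, Finset.mem_range]
  by_cases hc : ((∀ i, e i < N + 3) ∧ e 0 = 0 ∧ ∑ i : Fin (N+1), (N + 2 - (i:ℕ)) * e i = N + 2 - k)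
  · rw [if_pos (hiff.mpr hc), if_pos hc]
  · rw [if_neg (fun hh => hc (hiff.mp hh)), if_neg hc]

lemma sum_split {n : ℕ} (d : Fin (n+1) →₀ ℕ) :
    ∑ i, d i = d 0 + ∑ i, (Finsupp.erase 0 d) i := by
  rw [← Finset.add_sum_erase Finset.univ d (Finset.mem_univ 0)]
  congr 1
  rw [← Finset.add_sum_erase Finset.univ (fun i => (Finsupp.erase 0 d) i) (Finset.mem_univ 0),
    Finsupp.erase_same, zero_add]
  exact Finset.sum_congr rfl fun i hi => (Finsupp.erase_ne (Finset.mem_erase.mp hi).1).symm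

lemma prod_fact_split {n : ℕ} (d : Fin (n+1) →₀ ℕ) :
    ∏ i, ((d i).factorial : ℚ)
      = ((d 0).factorial : ℚ) * ∏ i, (((Finsupp.erase 0 d) i).factorial : ℚ) := by
  rw [← Finset.mul_prod_erase Finset.univ (fun i => ((d i).factorial : ℚ)) (Finset.mem_univ 0)]
  congr 1
  rw [← Finset.mul_prod_erase Finset.univ (fun i => (((Finsupp.erase 0 d) i).factorial : ℚ))
    (Finset.mem_univ 0), Finsupp.erase_same]
  simp only [Nat.factorial_zero, Nat.cast_one, one_mul]
  exact Finset.prod_congr rfl fun i hi => by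
    rw [Finsupp.erase_ne (Finset.mem_erase.mp hi).1]

/-- `∂F^o_{A_N}/∂t_0 = t_0^{N+1}/(N+1) + ∑_{k=1}^N t_0^{k-1} v^A_k`. -/
theorem openA_t0_derivative (N : ℕ) (hN : 1 ≤ N)
    (F : MvPolynomial (Fin (N + 1)) ℚ) (hF : OpenAPotential N F) :
    MvPolynomial.pderiv (0 : Fin (N + 1)) F
      = MvPolynomial.C (1 / ((N : ℚ) + 1)) * MvPolynomial.X (0 : Fin (N + 1)) ^ (N + 1)
        + ∑ k ∈ Finset.Icc 1 N, MvPolynomial.X (0 : Fin (N + 1)) ^ (k - 1) * vA N k := by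
  classical
  apply MvPolynomial.ext
  intro d
  have hne : (∏ i, ((d i).factorial : ℚ)) ≠ 0 :=
    Finset.prod_ne_zero_iff.mpr fun i _ => Nat.cast_ne_zero.mpr (Nat.factorial_pos _).ne'
  refine mul_left_cancel₀ hne ?_
  have he0 : (Finsupp.erase 0 d) 0 = 0 := Finsupp.erase_same
  have heo : ∀ i : Fin (N+1), i ≠ 0 → (Finsupp.erase 0 d) i = d i := fun i h =>
    Finsupp.erase_ne h
  -- LHS computation
  have h1 : Finsupp.erase 0 (d + Finsupp.single 0 1) = Finsupp.erase 0 d := by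
    ext i
    rcases eq_or_ne i 0 with rfl | h
    · simp [Finsupp.erase_same]
    · simp [Finsupp.erase_ne h, Finsupp.single_apply, Ne.symm h]
  have h3 : ((d + Finsupp.single 0 1 : Fin (N+1) →₀ ℕ)) 0 = d 0 + 1 := by simp
  have h4 : ∑ i : Fin (N+1), ((d + Finsupp.single 0 1 : Fin (N+1) →₀ ℕ)) i = (∑ i : Fin (N+1), d i) + 1 := by
    simp only [Finsupp.add_apply, Finset.sum_add_distrib]
    congr 1
    simp [Finsupp.single_apply]
  have h2 := coeff_F_eq N F hF (d + Finsupp.single 0 1)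
  rw [h1, h3, h4] at h2
  have hL : (∏ i, ((d i).factorial : ℚ)) * coeff d (pderiv (0 : Fin (N+1)) F)
      = if (∑ i : Fin (N+1), (N + 2 - (i:ℕ)) * (Finsupp.erase 0 d) i) + (d 0 + 1) = N + 2
        then ((((∑ i : Fin (N+1), d i) + 1) - 2).factorial : ℚ) else 0 := by
    rw [coeff_pderiv', ← h2, prod_fact_add_single]
    ring
  -- RHS pieces
  have hR1 : coeff d (MvPolynomial.C (1 / ((N : ℚ) + 1)) * MvPolynomial.X (0 : Fin (N+1)) ^ (N+1))
      = if Finsupp.single (0 : Fin (N+1)) (N+1) = d then 1 / ((N : ℚ) + 1) else 0 := by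
    rw [C_mul_X_pow_eq_monomial, coeff_monomial]
  have hR2 : ∀ k : ℕ, coeff d (MvPolynomial.X (0 : Fin (N+1)) ^ (k - 1) * vA N k)
      = if Finsupp.single (0 : Fin (N+1)) (k-1) ≤ d
        then coeff (d - Finsupp.single 0 (k-1)) (vA N k) else 0 := by
    intro k
    rw [X_pow_eq_monomial, coeff_monomial_mul']
    split_ifs <;> simp
  have hde : d - Finsupp.single (0 : Fin (N+1)) (d 0) = Finsupp.erase 0 d := by
    ext i
    rcases eq_or_ne i 0 with rfl | h
    · simp [Finsupp.tsub_apply, Finsupp.erase_same]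
    · simp [Finsupp.tsub_apply, Finsupp.single_apply, Ne.symm h, Finsupp.erase_ne h]
  rw [coeff_add, coeff_sum]
  by_cases hcond : (∑ i : Fin (N+1), (N + 2 - (i:ℕ)) * (Finsupp.erase 0 d) i) + (d 0 + 1) = N + 2
  · by_cases h0 : Finsupp.erase 0 d = 0
    · -- d = single 0 (N+1)
      have hSz : (∑ i : Fin (N+1), (N + 2 - (i:ℕ)) * (Finsupp.erase 0 d) i) = 0 := by
        rw [h0]; simp
      have hd0 : d 0 = N + 1 := by omega
      have hd : d = Finsupp.single 0 (N+1) := by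
        ext i
        rcases eq_or_ne i 0 with rfl | h
        · simp [hd0]
        · rw [← heo i h, h0]
          simp [Finsupp.single_apply, Ne.symm h]
      have hsumd : ∑ i : Fin (N+1), d i = N + 1 := by
        rw [hd]
        exact (Finset.sum_eq_single_of_mem 0 (Finset.mem_univ 0)
          (fun b _ hb => by simp [Finsupp.single_apply, Ne.symm hb])).trans (by simp)
      have hsum0 : ∀ k ∈ Finset.Icc 1 N,
          coeff d (MvPolynomial.X (0 : Fin (N+1)) ^ (k - 1) * vA N k) = 0 := by
        intro k hk
        rw [Finset.mem_Icc] at hk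
        rw [hR2 k]
        split_ifs with hle
        · rw [coeff_vA, if_neg]
          rintro ⟨-, h00, -⟩
          rw [Finsupp.tsub_apply, Finsupp.single_apply, if_pos rfl] at h00
          omega
        · rfl
      rw [Finset.sum_congr rfl hsum0, Finset.sum_const_zero, add_zero, hR1, if_pos hd.symm, hL,
        if_pos hcond, hsumd]
      have hprod : ∏ i, ((d i).factorial : ℚ) = ((N+1).factorial : ℚ) := by
        rw [hd, ← Finset.mul_prod_erase Finset.univ
          (fun i => (((Finsupp.single (0 : Fin (N+1)) (N+1) : Fin (N+1) →₀ ℕ) i).factorial : ℚ))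
          (Finset.mem_univ 0)]
        rw [Finset.prod_eq_one, mul_one]
        · simp
        · intro i hi
          have : i ≠ 0 := (Finset.mem_erase.mp hi).1
          simp [Finsupp.single_apply, Ne.symm this]
      rw [hprod]
      have hargs : (N + 1 + 1 - 2 : ℕ) = N := by omega
      rw [hargs, Nat.factorial_succ]
      have : ((N:ℚ) + 1) ≠ 0 := by positivity
      push_cast
      field_simp
    · -- generic case : k0 = d 0 + 1 ∈ [1, N]
      have hvpos : ∀ i : Fin (N+1), i ≠ 0 → 1 ≤ (i:ℕ) := fun i h =>
        Nat.one_le_iff_ne_zero.mpr (fun hh => h (Fin.ext (by simp [hh])))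
      obtain ⟨j, hj⟩ : ∃ j, (Finsupp.erase 0 d) j ≠ 0 := by
        by_contra hh
        push_neg at hh
        exact h0 (Finsupp.ext fun i => hh i)
      have hj0 : j ≠ 0 := fun hh => hj (hh ▸ he0)
      have hterm : (N + 2 - (j:ℕ)) * (Finsupp.erase 0 d) j
          ≤ ∑ i : Fin (N+1), (N + 2 - (i:ℕ)) * (Finsupp.erase 0 d) i :=
        Finset.single_le_sum (f := fun i : Fin (N+1) => (N + 2 - (i:ℕ)) * (Finsupp.erase 0 d) i)
          (fun i _ => Nat.zero_le _) (Finset.mem_univ j)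
      have h2le : 2 * 1 ≤ (N + 2 - (j:ℕ)) * (Finsupp.erase 0 d) j :=
        Nat.mul_le_mul (by have := j.isLt; have := hvpos j hj0; omega) (by omega)
      have hk0 : d 0 + 1 ≤ N := by omega
      have hdne : ¬ (Finsupp.single (0 : Fin (N+1)) (N+1) = d) := by
        intro hh
        apply hj
        rw [heo j hj0, ← hh]
        simp [Finsupp.single_apply, Ne.symm hj0]
      have hmem : d 0 + 1 ∈ Finset.Icc 1 N := Finset.mem_Icc.mpr ⟨by omega, hk0⟩
      have hothers : ∀ b ∈ Finset.Icc 1 N, b ≠ d 0 + 1 →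
          coeff d (MvPolynomial.X (0:Fin (N+1)) ^ (b-1) * vA N b) = 0 := by
        intro k hk hkne
        rw [Finset.mem_Icc] at hk
        rw [hR2 k]
        split_ifs with hle
        · rw [coeff_vA, if_neg]
          rintro ⟨-, h00, -⟩
          rw [Finsupp.tsub_apply, Finsupp.single_apply, if_pos rfl] at h00
          rw [Finsupp.single_le_iff] at hle
          omega
        · rfl
      rw [Finset.sum_eq_single_of_mem (d 0 + 1) hmem hothers, hR1, if_neg hdne, zero_add,
        hR2, if_pos (Finsupp.single_le_iff.mpr (by omega))]
      have hk1 : d 0 + 1 - 1 = d 0 := by omega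
      rw [hk1, hde, coeff_vA]
      have hbound : ∀ i : Fin (N+1), (Finsupp.erase 0 d) i < N + 3 := by
        intro i
        rcases eq_or_ne i 0 with rfl | hi
        · rw [he0]; omega
        · have ht1 : (N + 2 - (i:ℕ)) * (Finsupp.erase 0 d) i
              ≤ ∑ i : Fin (N+1), (N + 2 - (i:ℕ)) * (Finsupp.erase 0 d) i :=
            Finset.single_le_sum (f := fun i : Fin (N+1) => (N + 2 - (i:ℕ)) * (Finsupp.erase 0 d) i)
              (fun i _ => Nat.zero_le _) (Finset.mem_univ i)
          have ht2 : 2 * ((Finsupp.erase 0 d) i) ≤ (N + 2 - (i:ℕ)) * (Finsupp.erase 0 d) i :=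
            Nat.mul_le_mul_right _ (by have := i.isLt; have := hvpos i hi; omega)
          omega
      rw [if_pos ⟨hbound, he0, by omega⟩, hL, if_pos hcond]
      have hsumsplit := sum_split d
      have harg : (∑ i : Fin (N+1), (Finsupp.erase 0 d) i) + (d 0 + 1) - 2
          = (∑ i : Fin (N+1), d i) + 1 - 2 := by omega
      rw [harg, prod_fact_split d, Nat.add_sub_cancel]
      have hne1 : ((d 0).factorial : ℚ) ≠ 0 := Nat.cast_ne_zero.mpr (Nat.factorial_pos _).ne'
      have hne2 : (∏ i, (((Finsupp.erase 0 d) i).factorial : ℚ)) ≠ 0 :=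
        Finset.prod_ne_zero_iff.mpr fun i _ => Nat.cast_ne_zero.mpr (Nat.factorial_pos _).ne'
      field_simp
  · rw [hL, if_neg hcond]
    have hdne : ¬ (Finsupp.single (0:Fin (N+1)) (N+1) = d) := by
      intro hh
      apply hcond
      have hh0 : d 0 = N + 1 := by rw [← hh]; simp
      have hEz : Finsupp.erase 0 d = 0 := by rw [← hh, Finsupp.erase_single]
      rw [hEz]
      simp [hh0]
    have hzero : ∀ k ∈ Finset.Icc 1 N, coeff d (MvPolynomial.X (0:Fin (N+1)) ^ (k-1) * vA N k) = 0 := by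
      intro k hk
      rw [Finset.mem_Icc] at hk
      rw [hR2 k]
      split_ifs with hle
      · rw [coeff_vA, if_neg]
        rintro ⟨-, h00, hs⟩
        rw [Finsupp.single_le_iff] at hle
        rw [Finsupp.tsub_apply, Finsupp.single_apply, if_pos rfl] at h00
        have hk1 : k - 1 = d 0 := by omega
        rw [hk1, hde] at hs
        apply hcond
        omega
      · rfl
    rw [hR1, if_neg hdne, Finset.sum_congr rfl hzero, Finset.sum_const_zero, add_zero, mul_zero]
end

section
/- Let x_2, x_3, ... and y_1, y_2, ... be formal variables and suppose they satisfy, for every α ≥ 1, the relation y_α = Σ_{m=1}^α φ_{α,m}/m + Σ_{m=0}^{α-1} Σ_{k=m+1}^α (y_1^{α+1-k}/(α+1-k)!) · ((m+α-k)!/m!) · φ_{k-1,m}, where φ_{k,m} = Σ_{γ_1+...+γ_m=k, γ_i≥2} x_{γ_1}···x_{γ_m} (with φ_{k,0} = δ_{k,0}). Then as formal power series in z: Σ_{α≥1} y_α z^α = -log(1 - Σ_{α≥2} x_α z^α - z·y_1). -/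
open PowerSeries

/-- Compositions of `s` into `m` parts, each part `≥ lo`. -/
def comps (m s lo : ℕ) : Finset (Fin m → ℕ) :=
  Finset.filter (fun γ : Fin m → ℕ => (∀ i, lo ≤ γ i) ∧ ∑ i, γ i = s)
    (Fintype.piFinset fun _ : Fin m => Finset.range (s + 1))

lemma coeff_mk_pow (v : ℕ → ℚ) (m n : ℕ) :
    PowerSeries.coeff n ((PowerSeries.mk v) ^ m) = ∑ γ ∈ comps m n 0, ∏ i, v (γ i) := by
  induction m generalizing n with
  | zero =>
    simp only [pow_zero, coeff_one, comps]
    rcases eq_or_ne n 0 with rfl | hn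
    · rw [if_pos rfl]
      rw [show (Finset.filter (fun γ : Fin 0 → ℕ => (∀ i, 0 ≤ γ i) ∧ ∑ i, γ i = 0)
          (Fintype.piFinset fun _ : Fin 0 => Finset.range (0 + 1))) = {fun i => i.elim0} from by
        ext γ
        simp [funext_iff]]
      simp
    · rw [if_neg hn, Finset.sum_eq_zero]
      intro γ hγ
      simp only [Finset.mem_filter] at hγ
      exact absurd hγ.2.2 (by simpa using hn.symm)
  | succ m ih =>
    rw [pow_succ', coeff_mul]
    rw [Finset.Nat.sum_antidiagonal_eq_sum_range_succ_mk]
    simp only [coeff_mk, ih, Finset.mul_sum]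
    rw [Finset.sum_sigma']
    refine Finset.sum_nbij' (fun p => Fin.cons p.1 p.2) (fun γ => ⟨γ 0, Fin.tail γ⟩) ?_ ?_ ?_ ?_ ?_
    · rintro ⟨a, γ⟩ hp
      simp only [Finset.mem_sigma, Finset.mem_range, comps, Finset.mem_filter,
        Fintype.mem_piFinset] at hp ⊢
      obtain ⟨ha, hγ, hlo, hsum⟩ := hp
      have ha' : a ≤ n := Nat.lt_succ_iff.mp ha
      refine ⟨fun i => ?_, fun i => Nat.zero_le _, ?_⟩
      · refine Fin.cases ?_ ?_ i
        · simpa using ha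
        · intro j
          simp only [Fin.cons_succ, Finset.mem_range]
          have := hγ j
          omega
      · rw [Fin.sum_cons, hsum]
        omega
    · intro γ hγ
      simp only [comps, Finset.mem_filter, Fintype.mem_piFinset, Finset.mem_range,
        Finset.mem_sigma] at hγ ⊢
      obtain ⟨hmem, hlo, hsum⟩ := hγ
      have h0 : γ 0 ≤ n := by
        rw [← hsum]; exact Finset.single_le_sum (fun i _ => Nat.zero_le (γ i)) (Finset.mem_univ 0)
      have htail : ∑ j, Fin.tail γ j = n - γ 0 := by
        have := Fin.sum_univ_succ γ
        rw [hsum] at this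
        simp only [Fin.tail]
        omega
      refine ⟨by omega, fun j => ?_, fun j => Nat.zero_le _, htail⟩
      have : Fin.tail γ j ≤ n - γ 0 := by
        rw [← htail]
        exact Finset.single_le_sum (fun i _ => Nat.zero_le _) (Finset.mem_univ j)
      omega
    · rintro ⟨a, γ⟩ hp
      simp [Fin.tail_cons]
    · intro γ hγ
      simp [Fin.cons_self_tail]
    · rintro ⟨a, γ⟩ hp
      rw [Fin.prod_univ_succ]
      simp [Fin.tail]

lemma coeff_xpart_pow (x : ℕ → ℚ) (m n : ℕ) :
    PowerSeries.coeff n ((PowerSeries.mk fun g => if 2 ≤ g then x g else 0) ^ m)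
      = ∑ γ ∈ comps m n 2, ∏ i, x (γ i) := by
  rw [coeff_mk_pow]
  have hsub : comps m n 2 ⊆ comps m n 0 := by
    intro γ h
    simp only [comps, Finset.mem_filter] at h ⊢
    exact ⟨h.1, fun i => Nat.zero_le _, h.2.2⟩
  rw [← Finset.sum_subset hsub]
  · refine Finset.sum_congr rfl fun γ hγ => Finset.prod_congr rfl fun i _ => ?_
    simp only [comps, Finset.mem_filter] at hγ
    rw [if_pos (hγ.2.1 i)]
  · intro γ hγ hγ2
    simp only [comps, Finset.mem_filter] at hγ hγ2
    have hne : ¬ ∀ i, 2 ≤ γ i := fun h => hγ2 ⟨hγ.1, h, hγ.2.2⟩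
    push_neg at hne
    obtain ⟨i, hi⟩ := hne
    exact Finset.prod_eq_zero (Finset.mem_univ i) (by rw [if_neg (by omega)])

lemma coeff_u_pow (x : ℕ → ℚ) (c : ℚ) (φ : ℕ → ℕ → ℚ)
    (hφ : ∀ k m, φ k m = ∑ γ ∈ comps m k 2, ∏ i, x (γ i)) (m n : ℕ) (h : m ≤ n) :
    PowerSeries.coeff n
        ((PowerSeries.mk fun g => if g = 1 then c else if 2 ≤ g then x g else 0) ^ m)
      = ∑ j ∈ Finset.range (m + 1), (m.choose j : ℚ) * c ^ j * φ (n - j) (m - j) := by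
  set Xs : PowerSeries ℚ := PowerSeries.mk fun g => if 2 ≤ g then x g else 0 with hXs
  have hu : (PowerSeries.mk fun g => if g = 1 then c else if 2 ≤ g then x g else 0)
      = PowerSeries.C c * PowerSeries.X + Xs := by
    ext k
    rcases k with _ | _ | k <;>
      simp [hXs, coeff_mk, PowerSeries.coeff_C_mul, PowerSeries.coeff_X]
  rw [hu, add_pow, map_sum]
  refine Finset.sum_congr rfl fun j hj => ?_
  have hj' : j ≤ m := Nat.lt_succ_iff.mp (Finset.mem_range.mp hj)
  have key : (PowerSeries.C c * PowerSeries.X) ^ j * Xs ^ (m - j)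
        * ((m.choose j : ℕ) : PowerSeries ℚ)
      = PowerSeries.C (c ^ j * (m.choose j : ℚ)) * (PowerSeries.X ^ j * Xs ^ (m - j)) := by
    rw [mul_pow, ← map_pow, ← map_natCast (PowerSeries.C) (m.choose j), map_mul]
    ring
  rw [key, PowerSeries.coeff_C_mul, PowerSeries.coeff_X_pow_mul', if_pos (hj'.trans h),
    coeff_xpart_pow, ← hφ]
  ring

lemma coef_eq (m i : ℕ) (c P : ℚ) :
    ((m + i + 1).choose (i + 1) : ℚ) * c ^ (i + 1) * P / ((m + (i + 1) : ℕ) : ℚ)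
      = c ^ (i + 1) / ((i + 1).factorial : ℚ)
          * (((m + i).factorial : ℚ) / (m.factorial : ℚ)) * P := by
  have h := Nat.cast_choose ℚ (show i + 1 ≤ m + i + 1 by omega)
  have e : m + i + 1 - (i + 1) = m := by omega
  rw [h, e, Nat.factorial_succ (m + i)]
  have nz1 : ((i + 1).factorial : ℚ) ≠ 0 := by exact_mod_cast (i + 1).factorial_ne_zero
  have nz2 : ((m).factorial : ℚ) ≠ 0 := by exact_mod_cast (m).factorial_ne_zero
  have nz3 : ((m + i + 1 : ℕ) : ℚ) ≠ 0 := by exact_mod_cast Nat.succ_ne_zero (m + i)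
  have e2 : ((m + (i + 1) : ℕ) : ℚ) = ((m + i + 1 : ℕ) : ℚ) := by norm_cast
  rw [e2]
  push_cast
  field_simp

lemma reindex (φ : ℕ → ℕ → ℚ) (c : ℚ) (n : ℕ) :
    ∑ m ∈ Finset.range (n + 1),
        (∑ j ∈ Finset.range (m + 1), (m.choose j : ℚ) * c ^ j * φ (n - j) (m - j)) / m
      = (∑ m ∈ Finset.Icc 1 n, φ n m / m)
        + ∑ m ∈ Finset.range n, ∑ k ∈ Finset.Icc (m + 1) n,
            c ^ (n + 1 - k) / ((n + 1 - k).factorial : ℚ)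
              * (((m + n - k).factorial : ℚ) / (m.factorial : ℚ)) * φ (k - 1) m := by
  have step1 : ∑ m ∈ Finset.range (n + 1),
        (∑ j ∈ Finset.range (m + 1), (m.choose j : ℚ) * c ^ j * φ (n - j) (m - j)) / m
      = ∑ m ∈ Finset.range (n + 1), ∑ j ∈ Finset.range (n + 1 - m),
          ((m + j).choose j : ℚ) * c ^ j * φ (n - j) m / ((m + j : ℕ) : ℚ) := by
    simp only [Finset.sum_div]
    rw [Finset.sum_sigma', Finset.sum_sigma']
    refine Finset.sum_nbij' (fun p => ⟨p.1 - p.2, p.2⟩) (fun p => ⟨p.1 + p.2, p.2⟩)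
      ?_ ?_ ?_ ?_ ?_
    · rintro ⟨m, j⟩ hp
      simp only [Finset.mem_sigma, Finset.mem_range] at hp ⊢
      omega
    · rintro ⟨m, j⟩ hp
      simp only [Finset.mem_sigma, Finset.mem_range] at hp ⊢
      omega
    · rintro ⟨m, j⟩ hp
      simp only [Finset.mem_sigma, Finset.mem_range] at hp
      simp only [Sigma.mk.inj_iff, heq_eq_eq, and_true]
      omega
    · rintro ⟨m, j⟩ hp
      simp only [Sigma.mk.inj_iff, heq_eq_eq, and_true]
      omega
    · rintro ⟨m, j⟩ hp
      simp only [Finset.mem_sigma, Finset.mem_range] at hp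
      have hjm : j ≤ m := by omega
      have : m - j + j = m := by omega
      rw [this]
  rw [step1]
  have step2 : ∀ m ∈ Finset.range (n + 1),
      ∑ j ∈ Finset.range (n + 1 - m),
          ((m + j).choose j : ℚ) * c ^ j * φ (n - j) m / ((m + j : ℕ) : ℚ)
        = φ n m / m
          + ∑ i ∈ Finset.range (n - m),
            ((m + (i + 1)).choose (i + 1) : ℚ) * c ^ (i + 1) * φ (n - (i + 1)) m
              / ((m + (i + 1) : ℕ) : ℚ) := by
    intro m hm
    have hmn : m ≤ n := Nat.lt_succ_iff.mp (Finset.mem_range.mp hm)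
    have e : n + 1 - m = (n - m) + 1 := by omega
    rw [e, Finset.sum_range_succ', add_comm]
    simp
  rw [Finset.sum_congr rfl step2, Finset.sum_add_distrib]
  congr 1
  · rw [Finset.sum_range_succ', ← Finset.Ico_add_one_right_eq_Icc, Finset.sum_Ico_eq_sum_range]
    simp [Nat.add_sub_cancel, add_comm 1]
  · rw [Finset.sum_range_succ]
    simp only [Nat.sub_self, Finset.range_zero, Finset.sum_empty, add_zero]
    refine Finset.sum_congr rfl fun m hm => ?_
    have hmn : m < n := Finset.mem_range.mp hm
    rw [← Finset.Ico_add_one_right_eq_Icc, Finset.sum_Ico_eq_sum_range]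
    have e : n + 1 - (m + 1) = n - m := by omega
    rw [e, ← Finset.sum_range_reflect]
    refine Finset.sum_congr rfl fun i hi => ?_
    have hi' : i < n - m := Finset.mem_range.mp hi
    have h1 : n + 1 - (m + 1 + i) = (n - m - 1 - i) + 1 := by omega
    have h2 : m + n - (m + 1 + i) = m + (n - m - 1 - i) := by omega
    have h3 : m + 1 + i - 1 = n - ((n - m - 1 - i) + 1) := by omega
    rw [h1, h2, h3]
    exact coef_eq m (n - m - 1 - i) c _

/-- `-log(1-u)` for a power series `u` with zero constant term:
`∑_{m ≥ 1} u^m/m` (the `m = 0` term contributes `0` since division by `0` is `0`). -/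
noncomputable def negLogOneSub (u : PowerSeries ℚ) : PowerSeries ℚ :=
  PowerSeries.mk fun n => ∑ m ∈ Finset.range (n + 1), PowerSeries.coeff n (u ^ m) / m

/-- if `y_α = ∑_{m=1}^α φ_{α,m}/m + ∑_{m=0}^{α-1} ∑_{k=m+1}^α
(y_1^{α+1-k}/(α+1-k)!)((m+α-k)!/m!) φ_{k-1,m}` for every `α ≥ 1`, where
`φ_{k,m} = ∑_{γ_1+⋯+γ_m=k, γ_i ≥ 2} x_{γ_1}⋯x_{γ_m}`, then
`∑_{α≥1} y_α z^α = -log(1 - ∑_{α≥2} x_α z^α - z y_1)` as formal power series. -/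
theorem extended_flows_generating_function (x y : ℕ → ℚ)
    (φ : ℕ → ℕ → ℚ) (hφ : ∀ k m, φ k m = ∑ γ ∈ comps m k 2, ∏ i, x (γ i))
    (hy : ∀ α, 1 ≤ α →
      y α = (∑ m ∈ Finset.Icc 1 α, φ α m / m)
        + ∑ m ∈ Finset.range α, ∑ k ∈ Finset.Icc (m + 1) α,
            y 1 ^ (α + 1 - k) / ((α + 1 - k).factorial : ℚ)
              * (((m + α - k).factorial : ℚ) / (m.factorial : ℚ)) * φ (k - 1) m) :
    PowerSeries.mk (fun n => if n = 0 then 0 else y n)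
      = negLogOneSub
          (PowerSeries.mk fun n => if n = 1 then y 1 else if 2 ≤ n then x n else 0) := by
  ext n
  rw [negLogOneSub, coeff_mk, coeff_mk]
  rcases eq_or_ne n 0 with rfl | hn
  · simp
  · rw [if_neg hn, hy n (Nat.one_le_iff_ne_zero.mpr hn), ← reindex φ (y 1) n]
    refine Finset.sum_congr rfl fun m hm => ?_
    rw [coeff_u_pow x (y 1) φ hφ m n (Nat.lt_succ_iff.mp (Finset.mem_range.mp hm))]
end

section
/- Stabilization of the open D-type potential: for any integers 4 ≤ N < M and any α with 1 ≤ α < N, the Laurent polynomial ∂F^o_{D_N}/∂t_α under the substitution t_{N-β} = s_β (1 ≤ β ≤ N-1), t_N = s_{-1} equals ∂F^o_{D_M}/∂t_α under the substitution t_{M-β} = s_β (1 ≤ β ≤ M-1), t_M = s_{-1}, as polynomials in s_{-1}, s_1, ..., s_M and Laurent polynomials in t_0. -/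
/-- The polynomial `v^D_b(t_1,…,t_{N-1}) = ∑_{α : ∑ (N-k) α_k = N-b}
((|α|+2b-3)!/(2b-2)!) ∏ t_k^{α_k}/α_k!`, as a function of `t`. -/
noncomputable def vD (N b : ℕ) (t : ℕ → ℝ) : ℝ :=
  ∑ a ∈ Finset.filter
      (fun a : Fin N → ℕ => (∀ i : Fin N, (i : ℕ) = 0 → a i = 0) ∧ ∑ i : Fin N, (N - (i : ℕ)) * a i = N - b)
      (Fintype.piFinset fun _ : Fin N => Finset.range (N + 1)),
    ((((∑ i, a i) + 2 * b - 3).factorial : ℝ) / ((2 * b - 2).factorial : ℝ)) *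
      ∏ i : Fin N, t (i : ℕ) ^ a i / ((a i).factorial : ℝ)

/-- The open potential of type `D_N`:
`F^o_{D_N} = t_0^{2N-1}/(2^{N-2}(2N-1)(2N-2)) + t_N^2/(2t_0)
 + ∑_{k=1}^{N-1} v^D_k t_0^{2k-1}/(2^{k-1}(2k-1))`. -/
noncomputable def FD (N : ℕ) (t : ℕ → ℝ) : ℝ :=
  t 0 ^ (2 * N - 1) / (2 ^ (N - 2) * (2 * (N : ℝ) - 1) * (2 * (N : ℝ) - 2))
    + t N ^ 2 / (2 * t 0)
    + ∑ k ∈ Finset.Icc 1 (N - 1), vD N k t * t 0 ^ (2 * k - 1) / (2 ^ (k - 1) * (2 * (k : ℝ) - 1))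

/-- The partial derivative `∂F/∂t_k` at the point `t`. -/
noncomputable def pd (k : ℕ) (F : (ℕ → ℝ) → ℝ) (t : ℕ → ℝ) : ℝ :=
  deriv (fun x => F (Function.update t k x)) (t k)

/-- The substituted point: `t_0 = t0`, `t_N = s₋₁` (denoted `sbar`), and
`t_{N-β} = s_β` for `1 ≤ β ≤ N-1`, i.e. `t_i = s_{N-i}` for `1 ≤ i ≤ N-1`. -/
noncomputable def ptD (N : ℕ) (t0 sbar : ℝ) (s : ℕ → ℝ) : ℕ → ℝ :=
  fun i => if i = 0 then t0 else if i = N then sbar else s (N - i)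

/-! ### Auxiliary definitions -/

open Finset

/-- The index set of `vD N k`. -/
def Sset (N k : ℕ) : Finset (Fin N → ℕ) :=
  Finset.filter
    (fun a : Fin N → ℕ =>
      (∀ i : Fin N, (i : ℕ) = 0 → a i = 0) ∧ ∑ i : Fin N, (N - (i : ℕ)) * a i = N - k)
    (Fintype.piFinset fun _ : Fin N => Finset.range (N + 1))

lemma vD_eq (N b : ℕ) (t : ℕ → ℝ) :
    vD N b t = ∑ a ∈ Sset N b,
      ((((∑ i, a i) + 2 * b - 3).factorial : ℝ) / ((2 * b - 2).factorial : ℝ)) *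
        ∏ i : Fin N, t (i : ℕ) ^ a i / ((a i).factorial : ℝ) := rfl

lemma mem_Sset (N k : ℕ) (a : Fin N → ℕ) :
    a ∈ Sset N k ↔ (∀ i, a i ≤ N) ∧ (∀ i : Fin N, (i : ℕ) = 0 → a i = 0) ∧
      ∑ i : Fin N, (N - (i : ℕ)) * a i = N - k := by
  simp [Sset, Fintype.mem_piFinset, Nat.lt_succ_iff, and_assoc]

/-- The stable index set. -/
def Tset (α k : ℕ) : Finset (Fin (α + 1) → ℕ) :=
  Finset.filter
    (fun c : Fin (α + 1) → ℕ =>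
      c 0 = 0 ∧ ∑ β : Fin (α + 1), (β : ℕ) * c β = α - k)
    (Fintype.piFinset fun _ : Fin (α + 1) => Finset.range (α + 1))

lemma mem_Tset (α k : ℕ) (c : Fin (α + 1) → ℕ) :
    c ∈ Tset α k ↔ (∀ β, c β ≤ α) ∧ c 0 = 0 ∧
      ∑ β : Fin (α + 1), (β : ℕ) * c β = α - k := by
  simp [Tset, Fintype.mem_piFinset, Nat.lt_succ_iff, and_assoc]

/-- Extension of a `Fin N`-indexed family to `ℕ` by zero. -/
def aEx (N : ℕ) (a : Fin N → ℕ) (j : ℕ) : ℕ := if h : j < N then a ⟨j, h⟩ else 0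

def cEx (α : ℕ) (c : Fin (α + 1) → ℕ) (j : ℕ) : ℕ :=
  if h : j < α + 1 then c ⟨j, h⟩ else 0

/-- The reindexed (and shifted at the top slot) family. -/
def eD (N α : ℕ) (a : Fin N → ℕ) (j : ℕ) : ℕ :=
  aEx N a (N - j) - (if j = N - α then 1 else 0)

def phiD (N α : ℕ) (a : Fin N → ℕ) : Fin (α + 1) → ℕ := fun β => eD N α a (β : ℕ)

def psiD (N α : ℕ) (c : Fin (α + 1) → ℕ) : Fin N → ℕ :=
  fun i => (if (i : ℕ) = α then 1 else 0) + cEx α c (N - (i : ℕ))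

lemma aEx_coe (N : ℕ) (a : Fin N → ℕ) (i : Fin N) : aEx N a (i : ℕ) = a i := by
  rw [aEx.eq_1, dif_pos i.isLt]

lemma cEx_coe (α : ℕ) (c : Fin (α + 1) → ℕ) (β : Fin (α + 1)) : cEx α c (β : ℕ) = c β := by
  rw [cEx.eq_1, dif_pos β.isLt]

lemma psiD_apply (N α : ℕ) (c : Fin (α + 1) → ℕ) (i : Fin N) :
    psiD N α c i = (if (i : ℕ) = α then 1 else 0) + cEx α c (N - (i : ℕ)) := rfl

lemma eD_zero (N α : ℕ) (hα1 : 1 ≤ α) (hα2 : α < N) (a : Fin N → ℕ) : eD N α a 0 = 0 := by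
  rw [eD.eq_1, Nat.sub_zero, aEx.eq_1, dif_neg (lt_irrefl N), if_neg (by omega)]

/-- Summing an indicator over `Fin N`. -/
lemma sum_ind (N α : ℕ) (hα2 : α < N) (m : ℕ) :
    ∑ i : Fin N, (if (i : ℕ) = α then m else 0) = m := by
  rw [Fin.sum_univ_eq_sum_range (fun j => if j = α then m else 0) N,
    Finset.sum_ite_eq' (Finset.range N) α (fun _ => m), if_pos (Finset.mem_range.mpr hα2)]

/-- Reindexing `i ↦ N - i` of a product over `Fin N` of a function supported on `[1, α]`. -/
lemma prod_reflect_trunc {M : Type*} [CommMonoid M] (N α : ℕ) (hα : α < N) (f : ℕ → M)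
    (h0 : f 0 = 1) (h1 : ∀ j, α < j → f j = 1) :
    ∏ i : Fin N, f (N - (i : ℕ)) = ∏ β : Fin (α + 1), f (β : ℕ) := by
  rw [Fin.prod_univ_eq_prod_range (fun i => f (N - i)) N,
    Fin.prod_univ_eq_prod_range (fun i => f i) (α + 1)]
  have h2 : ∀ i ∈ Finset.range N, f (N - i) = f (N - 1 - i + 1) := by
    intro i hi; rw [Finset.mem_range] at hi; congr 1; omega
  rw [Finset.prod_congr rfl h2, Finset.prod_range_reflect (fun j => f (j + 1)) N,
    Finset.prod_range_succ' (fun i => f i) α, h0, mul_one]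
  refine (Finset.prod_subset (Finset.range_subset_range.mpr (by omega)) ?_).symm
  intro j hj hj'
  rw [Finset.mem_range] at hj'
  exact h1 (j + 1) (by omega)

/-- Additive version of `prod_reflect_trunc`. -/
lemma sum_reflect_trunc {M : Type*} [AddCommMonoid M] (N α : ℕ) (hα : α < N) (f : ℕ → M)
    (h0 : f 0 = 0) (h1 : ∀ j, α < j → f j = 0) :
    ∑ i : Fin N, f (N - (i : ℕ)) = ∑ β : Fin (α + 1), f (β : ℕ) := by
  rw [Fin.sum_univ_eq_sum_range (fun i => f (N - i)) N,
    Fin.sum_univ_eq_sum_range (fun i => f i) (α + 1)]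
  have h2 : ∀ i ∈ Finset.range N, f (N - i) = f (N - 1 - i + 1) := by
    intro i hi; rw [Finset.mem_range] at hi; congr 1; omega
  rw [Finset.sum_congr rfl h2, Finset.sum_range_reflect (fun j => f (j + 1)) N,
    Finset.sum_range_succ' (fun i => f i) α, h0, add_zero]
  refine (Finset.sum_subset (Finset.range_subset_range.mpr (by omega)) ?_).symm
  intro j hj hj'
  rw [Finset.mem_range] at hj'
  exact h1 (j + 1) (by omega)

/-- Basic consequences of membership in `Sset N k` together with `a α ≠ 0`. -/
lemma Sset_facts (N α k : ℕ) (hα1 : 1 ≤ α) (hα2 : α < N) (hk1 : 1 ≤ k) (hk2 : k ≤ N - 1)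
    (a : Fin N → ℕ) (h0 : ∀ i : Fin N, (i : ℕ) = 0 → a i = 0)
    (hsum : ∑ i : Fin N, (N - (i : ℕ)) * a i = N - k) (hne : a ⟨α, hα2⟩ ≠ 0) :
    k ≤ α ∧ (∀ i : Fin N, 0 < (i : ℕ) → (i : ℕ) < N - α → (i : ℕ) ≠ α → a i = 0) ∧
      (α < N - α → a ⟨α, hα2⟩ = 1) := by
  have hpos : 0 < a ⟨α, hα2⟩ := Nat.pos_of_ne_zero hne
  have hsingle : (N - α) * a ⟨α, hα2⟩ ≤ N - k := by
    rw [← hsum]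
    exact Finset.single_le_sum (f := fun i : Fin N => (N - (i : ℕ)) * a i)
      (fun i _ => Nat.zero_le _) (Finset.mem_univ ⟨α, hα2⟩)
  have hYge : N - α ≤ (N - α) * a ⟨α, hα2⟩ := Nat.le_mul_of_pos_right _ hpos
  refine ⟨by omega, ?_, ?_⟩
  · intro i hi1 hi2 hi3
    have hiN : (i : ℕ) < N := i.isLt
    have hne' : i ≠ ⟨α, hα2⟩ := by
      intro h; apply hi3; rw [h]
    have hpair : (N - (i : ℕ)) * a i + (N - α) * a ⟨α, hα2⟩ ≤ N - k := by
      rw [← hsum]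
      calc (N - (i : ℕ)) * a i + (N - α) * a ⟨α, hα2⟩
          = ∑ j ∈ ({i, ⟨α, hα2⟩} : Finset (Fin N)), (N - (j : ℕ)) * a j :=
            (Finset.sum_pair (f := fun j : Fin N => (N - (j : ℕ)) * a j) hne').symm
        _ ≤ _ := Finset.sum_le_sum_of_subset (Finset.subset_univ _)
    by_contra hai
    have hXge : N - (i : ℕ) ≤ (N - (i : ℕ)) * a i :=
      Nat.le_mul_of_pos_right _ (Nat.pos_of_ne_zero hai)
    omega
  · intro hlt
    by_contra h2
    have h3 : 2 ≤ a ⟨α, hα2⟩ := by omega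
    have h4 : (N - α) * 2 ≤ (N - α) * a ⟨α, hα2⟩ := Nat.mul_le_mul_left _ h3
    omega

/-- The main combinatorial properties of `eD`/`phiD` for members of `Sset`. -/
lemma eD_props (N α k : ℕ) (hα1 : 1 ≤ α) (hα2 : α < N) (hk1 : 1 ≤ k) (hk2 : k ≤ N - 1)
    (a : Fin N → ℕ) (h0 : ∀ i : Fin N, (i : ℕ) = 0 → a i = 0)
    (hsum : ∑ i : Fin N, (N - (i : ℕ)) * a i = N - k) (hne : a ⟨α, hα2⟩ ≠ 0) :
    k ≤ α ∧
    (∀ i : Fin N, a i = eD N α a (N - (i : ℕ)) + (if (i : ℕ) = α then 1 else 0)) ∧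
    (∀ j, α < j → eD N α a j = 0) ∧
    (∑ β : Fin (α + 1), (β : ℕ) * phiD N α a β = α - k) ∧
    (∑ i : Fin N, a i = (∑ β : Fin (α + 1), phiD N α a β) + 1) := by
  obtain ⟨hkα, hsmall, h1⟩ := Sset_facts N α k hα1 hα2 hk1 hk2 a h0 hsum hne
  have hkey : ∀ i : Fin N, a i = eD N α a (N - (i : ℕ)) + (if (i : ℕ) = α then 1 else 0) := by
    intro i
    have hiN : (i : ℕ) < N := i.isLt
    rw [eD.eq_1, show N - (N - (i : ℕ)) = (i : ℕ) by omega, aEx_coe]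
    by_cases hiα : (i : ℕ) = α
    · rw [if_pos hiα, if_pos (by omega)]
      have hane : a i ≠ 0 := by
        rw [show i = ⟨α, hα2⟩ from Fin.ext hiα]; exact hne
      omega
    · rw [if_neg hiα, if_neg (by omega)]
      omega
  have hgt : ∀ j, α < j → eD N α a j = 0 := by
    intro j hj
    rw [eD.eq_1]
    by_cases hjN : j < N
    · have h2' : N - j < N := by omega
      rw [aEx.eq_1, dif_pos h2']
      by_cases hjα : j = N - α
      · rw [if_pos hjα]
        have hval : a ⟨N - j, h2'⟩ = 1 := by
          rw [show (⟨N - j, h2'⟩ : Fin N) = ⟨α, hα2⟩ from Fin.ext (show N - j = α by omega)]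
          exact h1 (by omega)
        omega
      · rw [if_neg hjα]
        have hval : a ⟨N - j, h2'⟩ = 0 :=
          hsmall ⟨N - j, h2'⟩ (show 0 < N - j by omega) (show N - j < N - α by omega)
            (show N - j ≠ α by omega)
        omega
    · have hj0 : N - j = 0 := by omega
      have hN0 : 0 < N := by omega
      rw [hj0, aEx.eq_1, dif_pos hN0, h0 ⟨0, hN0⟩ rfl, if_neg (by omega)]
  have e2 : (∑ i : Fin N, (N - (i : ℕ)) * eD N α a (N - (i : ℕ)))
      = ∑ β : Fin (α + 1), (β : ℕ) * eD N α a (β : ℕ) := by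
    simpa using sum_reflect_trunc N α hα2 (fun j => j * eD N α a j) (by simp)
      (fun j hj => by simp [hgt j hj])
  have e1 : ∑ i : Fin N, (N - (i : ℕ)) * a i
      = (∑ i : Fin N, (N - (i : ℕ)) * eD N α a (N - (i : ℕ))) + (N - α) := by
    conv_rhs => rw [← sum_ind N α hα2 (N - α)]
    rw [← Finset.sum_add_distrib]
    refine Finset.sum_congr rfl fun i _ => ?_
    rw [hkey i, Nat.mul_add]
    congr 1
    split_ifs with h
    · rw [Nat.mul_one, h]
    · rw [Nat.mul_zero]
  have hphi : ∑ β : Fin (α + 1), (β : ℕ) * phiD N α a β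
      = ∑ β : Fin (α + 1), (β : ℕ) * eD N α a (β : ℕ) := by
    simp only [phiD]
  have hw : ∑ β : Fin (α + 1), (β : ℕ) * phiD N α a β = α - k := by
    rw [hphi, ← e2]; omega
  have e2' : (∑ i : Fin N, eD N α a (N - (i : ℕ))) = ∑ β : Fin (α + 1), eD N α a (β : ℕ) := by
    simpa using sum_reflect_trunc N α hα2 (fun j => eD N α a j)
      (eD_zero N α hα1 hα2 a) hgt
  have e1' : ∑ i : Fin N, a i = (∑ i : Fin N, eD N α a (N - (i : ℕ))) + 1 := by
    conv_rhs => rw [← sum_ind N α hα2 1]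
    rw [← Finset.sum_add_distrib]
    exact Finset.sum_congr rfl fun i _ => hkey i
  have hsz : ∑ i : Fin N, a i = (∑ β : Fin (α + 1), phiD N α a β) + 1 := by
    rw [e1', e2']; simp only [phiD]
  exact ⟨hkα, hkey, hgt, hw, hsz⟩

/-- the summand of `dD`: derivative of `vD` in the slot `α`. -/
noncomputable def dD (N α : ℕ) (h : α < N) (k : ℕ) (t : ℕ → ℝ) (x : ℝ) : ℝ :=
  ∑ a ∈ Sset N k,
    ((((∑ i, a i) + 2 * k - 3).factorial : ℝ) / ((2 * k - 2).factorial : ℝ)) *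
      (((a ⟨α, h⟩ : ℕ) : ℝ) * x ^ (a ⟨α, h⟩ - 1) / ((a ⟨α, h⟩).factorial : ℝ)) *
      ∏ i ∈ Finset.univ.erase (⟨α, h⟩ : Fin N), t (i : ℕ) ^ a i / ((a i).factorial : ℝ)

lemma hasDerivAt_vD (N k α : ℕ) (hα2 : α < N) (t : ℕ → ℝ) (x : ℝ) :
    HasDerivAt (fun y => vD N k (Function.update t α y)) (dD N α hα2 k t x) x := by
  have hv : ∀ y : ℝ,
      vD N k (Function.update t α y) =
        ∑ a ∈ Sset N k,
          (((((∑ i, a i) + 2 * k - 3).factorial : ℝ) / ((2 * k - 2).factorial : ℝ)) *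
            (∏ i ∈ Finset.univ.erase (⟨α, hα2⟩ : Fin N),
              t (i : ℕ) ^ a i / ((a i).factorial : ℝ)) /
            ((a ⟨α, hα2⟩).factorial : ℝ)) * y ^ (a ⟨α, hα2⟩) := by
    intro y
    rw [vD_eq]
    refine Finset.sum_congr rfl fun a _ => ?_
    rw [← Finset.mul_prod_erase Finset.univ _ (Finset.mem_univ (⟨α, hα2⟩ : Fin N))]
    have h1 : Function.update t α y (((⟨α, hα2⟩ : Fin N)) : ℕ) = y := by
      show Function.update t α y α = y
      exact Function.update_self α y t
    have h2 : ∀ i ∈ Finset.univ.erase (⟨α, hα2⟩ : Fin N),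
        Function.update t α y (i : ℕ) ^ a i / ((a i).factorial : ℝ) =
          t (i : ℕ) ^ a i / ((a i).factorial : ℝ) := by
      intro i hi
      have hiα : (i : ℕ) ≠ α := fun h => (Finset.mem_erase.mp hi).1 (Fin.ext h)
      rw [Function.update_of_ne hiα]
    rw [Finset.prod_congr rfl h2, h1]
    ring
  have key : HasDerivAt
      (fun y : ℝ => ∑ a ∈ Sset N k,
        (((((∑ i, a i) + 2 * k - 3).factorial : ℝ) / ((2 * k - 2).factorial : ℝ)) *
          (∏ i ∈ Finset.univ.erase (⟨α, hα2⟩ : Fin N),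
            t (i : ℕ) ^ a i / ((a i).factorial : ℝ)) /
          ((a ⟨α, hα2⟩).factorial : ℝ)) * y ^ (a ⟨α, hα2⟩))
      (∑ a ∈ Sset N k,
        (((((∑ i, a i) + 2 * k - 3).factorial : ℝ) / ((2 * k - 2).factorial : ℝ)) *
          (∏ i ∈ Finset.univ.erase (⟨α, hα2⟩ : Fin N),
            t (i : ℕ) ^ a i / ((a i).factorial : ℝ)) /
          ((a ⟨α, hα2⟩).factorial : ℝ)) * (((a ⟨α, hα2⟩ : ℕ) : ℝ) * x ^ (a ⟨α, hα2⟩ - 1))) x :=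
    HasDerivAt.fun_sum fun a _ => (hasDerivAt_pow _ x).const_mul _
  have heq : (fun y => vD N k (Function.update t α y)) =
      (fun y : ℝ => ∑ a ∈ Sset N k,
        (((((∑ i, a i) + 2 * k - 3).factorial : ℝ) / ((2 * k - 2).factorial : ℝ)) *
          (∏ i ∈ Finset.univ.erase (⟨α, hα2⟩ : Fin N),
            t (i : ℕ) ^ a i / ((a i).factorial : ℝ)) /
          ((a ⟨α, hα2⟩).factorial : ℝ)) * y ^ (a ⟨α, hα2⟩)) := funext hv
  rw [heq]
  have hval : dD N α hα2 k t x = ∑ a ∈ Sset N k,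
      (((((∑ i, a i) + 2 * k - 3).factorial : ℝ) / ((2 * k - 2).factorial : ℝ)) *
        (∏ i ∈ Finset.univ.erase (⟨α, hα2⟩ : Fin N),
          t (i : ℕ) ^ a i / ((a i).factorial : ℝ)) /
        ((a ⟨α, hα2⟩).factorial : ℝ)) * (((a ⟨α, hα2⟩ : ℕ) : ℝ) * x ^ (a ⟨α, hα2⟩ - 1)) := by
    rw [dD.eq_1]
    exact Finset.sum_congr rfl fun a _ => by ring
  rw [hval]
  exact key

lemma pd_FD (N α : ℕ) (hα1 : 1 ≤ α) (hα2 : α < N) (t : ℕ → ℝ) :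
    pd α (FD N) t = ∑ k ∈ Finset.Icc 1 (N - 1),
      dD N α hα2 k t (t α) * t 0 ^ (2 * k - 1) / (2 ^ (k - 1) * (2 * (k : ℝ) - 1)) := by
  have h0 : (0 : ℕ) ≠ α := by omega
  have hNα : N ≠ α := by omega
  have hshape : (fun x => FD N (Function.update t α x)) = fun x =>
      (t 0 ^ (2 * N - 1) / (2 ^ (N - 2) * (2 * (N : ℝ) - 1) * (2 * (N : ℝ) - 2))
        + t N ^ 2 / (2 * t 0)) +
      ∑ k ∈ Finset.Icc 1 (N - 1),
        vD N k (Function.update t α x) * t 0 ^ (2 * k - 1) / (2 ^ (k - 1) * (2 * (k : ℝ) - 1)) := by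
    funext x
    rw [FD.eq_1, Function.update_of_ne h0, Function.update_of_ne hNα]
  rw [pd.eq_1, hshape]
  exact (HasDerivAt.const_add _ (HasDerivAt.fun_sum fun k _ =>
    ((hasDerivAt_vD N k α hα2 t (t α)).mul_const _).div_const _)).deriv

/-- Evaluation of `dD` at the substituted point: it equals the stable inner sum. -/
lemma dD_eval (N α k : ℕ) (hα1 : 1 ≤ α) (hα2 : α < N) (hk1 : 1 ≤ k) (hk2 : k ≤ N - 1)
    (t0 sbar : ℝ) (s : ℕ → ℝ) :
    dD N α hα2 k (ptD N t0 sbar s) (ptD N t0 sbar s α) =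
      if k ≤ α then
        ∑ c ∈ Tset α k,
          ((((∑ β, c β) + 2 * k - 2).factorial : ℝ) / ((2 * k - 2).factorial : ℝ)) *
            ∏ β : Fin (α + 1), s (β : ℕ) ^ c β / ((c β).factorial : ℝ)
      else 0 := by
  have htα : ptD N t0 sbar s α = s (N - α) := by
    rw [ptD.eq_1]
    rw [if_neg (by omega : ¬ α = 0), if_neg (by omega : ¬ α = N)]
  rw [dD.eq_1, htα]
  rw [← Finset.sum_filter_of_ne (p := fun a : Fin N → ℕ => a ⟨α, hα2⟩ ≠ 0)
    (fun a _ hfa h0 => hfa (by rw [h0]; simp))]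
  by_cases hkα : k ≤ α
  swap
  · rw [if_neg hkα]
    refine Finset.sum_eq_zero fun a ha => ?_
    rw [Finset.mem_filter, mem_Sset] at ha
    obtain ⟨⟨hbd, h0, hsum⟩, hne⟩ := ha
    exact absurd (Sset_facts N α k hα1 hα2 hk1 hk2 a h0 hsum hne).1 hkα
  · rw [if_pos hkα]
    refine Finset.sum_nbij' (phiD N α) (psiD N α) ?_ ?_ ?_ ?_ ?_
    · -- phiD maps into Tset
      intro a ha
      rw [Finset.mem_filter, mem_Sset] at ha
      obtain ⟨⟨hbd, h0, hsum⟩, hne⟩ := ha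
      obtain ⟨_, hkey, hgt, hw, hsz⟩ := eD_props N α k hα1 hα2 hk1 hk2 a h0 hsum hne
      rw [mem_Tset]
      refine ⟨?_, ?_, hw⟩
      · intro β
        by_cases hβ : (β : ℕ) = 0
        · show eD N α a (β : ℕ) ≤ α
          rw [hβ, eD_zero N α hα1 hα2 a]; omega
        · have h1b : (β : ℕ) * phiD N α a β ≤ α - k := by
            rw [← hw]
            exact Finset.single_le_sum (f := fun β : Fin (α + 1) => (β : ℕ) * phiD N α a β)
              (fun _ _ => Nat.zero_le _) (Finset.mem_univ β)
          have h2b : phiD N α a β ≤ (β : ℕ) * phiD N α a β :=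
            Nat.le_mul_of_pos_left _ (by omega)
          omega
      · show eD N α a ((0 : Fin (α + 1)) : ℕ) = 0
        rw [Fin.val_zero, eD_zero N α hα1 hα2 a]
    · -- psiD maps into the filtered Sset
      intro c hc
      rw [mem_Tset] at hc
      obtain ⟨hcb, hc0, hcs⟩ := hc
      have hcEx : ∀ j, cEx α c j ≤ α := by
        intro j
        rw [cEx.eq_1]
        split
        · exact hcb _
        · omega
      rw [Finset.mem_filter, mem_Sset]
      refine ⟨⟨?_, ?_, ?_⟩, ?_⟩
      · intro i
        have := hcEx (N - (i : ℕ))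
        show (if (i : ℕ) = α then 1 else 0) + cEx α c (N - (i : ℕ)) ≤ N
        split_ifs <;> omega
      · intro i hi0
        show (if (i : ℕ) = α then 1 else 0) + cEx α c (N - (i : ℕ)) = 0
        rw [hi0, if_neg (by omega), Nat.sub_zero, cEx.eq_1, dif_neg (by omega)]
      · -- weighted sum condition
        have hkey2 : ∀ i : Fin N, (N - (i : ℕ)) * psiD N α c i
            = (N - (i : ℕ)) * cEx α c (N - (i : ℕ)) + (if (i : ℕ) = α then N - α else 0) := by
          intro i
          rw [psiD_apply, Nat.mul_add]
          rw [Nat.add_comm ((N - (i : ℕ)) * if (i : ℕ) = α then 1 else 0) _]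
          congr 1
          split_ifs with h
          · rw [Nat.mul_one, h]
          · rw [Nat.mul_zero]
        rw [Finset.sum_congr rfl fun i _ => hkey2 i, Finset.sum_add_distrib,
          sum_ind N α hα2 (N - α)]
        have e2 : (∑ i : Fin N, (N - (i : ℕ)) * cEx α c (N - (i : ℕ)))
            = ∑ β : Fin (α + 1), (β : ℕ) * cEx α c (β : ℕ) := by
          simpa using sum_reflect_trunc N α hα2 (fun j => j * cEx α c j) (by simp)
            (fun j hj => by rw [cEx.eq_1, dif_neg (by omega), Nat.mul_zero])
        have e3 : (∑ β : Fin (α + 1), (β : ℕ) * cEx α c (β : ℕ))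
            = ∑ β : Fin (α + 1), (β : ℕ) * c β :=
          Finset.sum_congr rfl fun β _ => by rw [cEx_coe]
        rw [e2, e3, hcs]
        omega
      · -- nonvanishing at slot α
        show ¬((if ((⟨α, hα2⟩ : Fin N) : ℕ) = α then 1 else 0) + cEx α c (N - ((⟨α, hα2⟩ : Fin N) : ℕ)) = 0)
        show ¬((if α = α then 1 else 0) + cEx α c (N - α) = 0)
        rw [if_pos rfl]
        omega
    · -- left inverse
      intro a ha
      rw [Finset.mem_filter, mem_Sset] at ha
      obtain ⟨⟨hbd, h0, hsum⟩, hne⟩ := ha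
      obtain ⟨_, hkey, hgt, _, _⟩ := eD_props N α k hα1 hα2 hk1 hk2 a h0 hsum hne
      funext i
      have hcphi : ∀ j, cEx α (phiD N α a) j = eD N α a j := by
        intro j
        rw [cEx.eq_1]
        split
        · rfl
        · rw [hgt j (by omega)]
      show (if (i : ℕ) = α then 1 else 0) + cEx α (phiD N α a) (N - (i : ℕ)) = a i
      rw [hcphi, Nat.add_comm]
      exact (hkey i).symm
    · -- right inverse
      intro c hc
      rw [mem_Tset] at hc
      obtain ⟨hcb, hc0, hcs⟩ := hc
      funext β
      show eD N α (psiD N α c) (β : ℕ) = c β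
      by_cases hβ0 : (β : ℕ) = 0
      · rw [hβ0, eD_zero N α hα1 hα2 _, show β = 0 from Fin.ext hβ0, hc0]
      · have hβα : (β : ℕ) ≤ α := by have := β.isLt; omega
        have h2' : N - (β : ℕ) < N := by omega
        rw [eD.eq_1, aEx.eq_1, dif_pos h2']
        have hψ : psiD N α c ⟨N - (β : ℕ), h2'⟩
            = (if N - (β : ℕ) = α then 1 else 0) + c β := by
          show (if N - (β : ℕ) = α then 1 else 0) + cEx α c (N - (N - (β : ℕ)))
            = (if N - (β : ℕ) = α then 1 else 0) + c β
          rw [show N - (N - (β : ℕ)) = (β : ℕ) by omega, cEx_coe]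
        rw [hψ]
        by_cases hNβ : (β : ℕ) = N - α
        · rw [if_pos hNβ, if_pos (by omega)]
          omega
        · rw [if_neg hNβ, if_neg (by omega)]
          omega
    · -- value equality
      intro a ha
      rw [Finset.mem_filter, mem_Sset] at ha
      obtain ⟨⟨hbd, h0, hsum⟩, hne⟩ := ha
      obtain ⟨_, hkey, hgt, hw, hsz⟩ := eD_props N α k hα1 hα2 hk1 hk2 a h0 hsum hne
      have hcoef : (∑ i, a i) + 2 * k - 3 = (∑ β, phiD N α a β) + 2 * k - 2 := by omega
      rw [hcoef, mul_assoc]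
      congr 1
      -- head factor
      have hpos : 0 < a ⟨α, hα2⟩ := Nat.pos_of_ne_zero hne
      have heα : eD N α a (N - α) = a ⟨α, hα2⟩ - 1 := by
        rw [eD.eq_1, if_pos rfl, show N - (N - α) = α by omega, aEx.eq_1, dif_pos hα2]
      have hhead : ((a ⟨α, hα2⟩ : ℕ) : ℝ) * s (N - α) ^ (a ⟨α, hα2⟩ - 1)
            / ((a ⟨α, hα2⟩).factorial : ℝ)
          = s (N - α) ^ eD N α a (N - α) / ((eD N α a (N - α)).factorial : ℝ) := by
        rw [heα, ← Nat.mul_factorial_pred hpos.ne']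
        push_cast
        rw [mul_div_mul_left _ _ (by exact_mod_cast hpos.ne' : ((a ⟨α, hα2⟩ : ℕ) : ℝ) ≠ 0)]
      have hprod : (∏ i ∈ Finset.univ.erase (⟨α, hα2⟩ : Fin N),
            ptD N t0 sbar s (i : ℕ) ^ a i / ((a i).factorial : ℝ))
          = ∏ i ∈ Finset.univ.erase (⟨α, hα2⟩ : Fin N),
            s (N - (i : ℕ)) ^ eD N α a (N - (i : ℕ)) / ((eD N α a (N - (i : ℕ))).factorial : ℝ) := by
        refine Finset.prod_congr rfl fun i hi => ?_
        have hiN : (i : ℕ) < N := i.isLt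
        have hiα : (i : ℕ) ≠ α := fun h => (Finset.mem_erase.mp hi).1 (Fin.ext h)
        by_cases hi0 : (i : ℕ) = 0
        · have hN0 : 0 < N := by omega
          have heN : eD N α a N = 0 := by
            rw [eD.eq_1, Nat.sub_self, aEx.eq_1, dif_pos hN0, h0 ⟨0, hN0⟩ rfl,
              if_neg (by omega)]
          rw [h0 i hi0, hi0, Nat.sub_zero, heN]
          simp
        · have hti : ptD N t0 sbar s (i : ℕ) = s (N - (i : ℕ)) := by
            rw [ptD.eq_1, if_neg hi0, if_neg (by omega)]
          have hei : eD N α a (N - (i : ℕ)) = a i := by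
            rw [eD.eq_1, if_neg (by omega : ¬ N - (i : ℕ) = N - α),
              show N - (N - (i : ℕ)) = (i : ℕ) by omega, aEx_coe, Nat.sub_zero]
          rw [hti, hei]
      rw [hhead, hprod]
      calc s (N - α) ^ eD N α a (N - α) / ((eD N α a (N - α)).factorial : ℝ) *
            ∏ i ∈ Finset.univ.erase (⟨α, hα2⟩ : Fin N),
              s (N - (i : ℕ)) ^ eD N α a (N - (i : ℕ)) / ((eD N α a (N - (i : ℕ))).factorial : ℝ)
          = ∏ i : Fin N,
              s (N - (i : ℕ)) ^ eD N α a (N - (i : ℕ)) / ((eD N α a (N - (i : ℕ))).factorial : ℝ) :=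
            Finset.mul_prod_erase Finset.univ
              (fun i : Fin N => s (N - (i : ℕ)) ^ eD N α a (N - (i : ℕ))
                / ((eD N α a (N - (i : ℕ))).factorial : ℝ))
              (Finset.mem_univ (⟨α, hα2⟩ : Fin N))
        _ = ∏ β : Fin (α + 1),
              s (β : ℕ) ^ eD N α a (β : ℕ) / ((eD N α a (β : ℕ)).factorial : ℝ) := by
            simpa using prod_reflect_trunc N α hα2
              (fun j => s j ^ eD N α a j / ((eD N α a j).factorial : ℝ))
              (by rw [eD_zero N α hα1 hα2 a]; simp)
              (fun j hj => by rw [hgt j hj]; simp)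
        _ = ∏ β : Fin (α + 1),
              s (β : ℕ) ^ phiD N α a β / ((phiD N α a β).factorial : ℝ) := by
            simp only [phiD]

/-- The stable form of the derivative. -/
lemma pd_FD_stable (N α : ℕ) (hα1 : 1 ≤ α) (hα2 : α < N) (t0 sbar : ℝ) (s : ℕ → ℝ) :
    pd α (FD N) (ptD N t0 sbar s) =
      ∑ k ∈ Finset.Icc 1 α,
        (∑ c ∈ Tset α k,
          ((((∑ β, c β) + 2 * k - 2).factorial : ℝ) / ((2 * k - 2).factorial : ℝ)) *
            ∏ β : Fin (α + 1), s (β : ℕ) ^ c β / ((c β).factorial : ℝ)) *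
          t0 ^ (2 * k - 1) / (2 ^ (k - 1) * (2 * (k : ℝ) - 1)) := by
  rw [pd_FD N α hα1 hα2 (ptD N t0 sbar s)]
  have ht0 : ptD N t0 sbar s 0 = t0 := by rw [ptD.eq_1, if_pos rfl]
  have step : ∀ k ∈ Finset.Icc 1 (N - 1),
      dD N α hα2 k (ptD N t0 sbar s) (ptD N t0 sbar s α) *
        ptD N t0 sbar s 0 ^ (2 * k - 1) / (2 ^ (k - 1) * (2 * (k : ℝ) - 1))
      = if k ≤ α then
          (∑ c ∈ Tset α k,
            ((((∑ β, c β) + 2 * k - 2).factorial : ℝ) / ((2 * k - 2).factorial : ℝ)) *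
              ∏ β : Fin (α + 1), s (β : ℕ) ^ c β / ((c β).factorial : ℝ)) *
            t0 ^ (2 * k - 1) / (2 ^ (k - 1) * (2 * (k : ℝ) - 1))
        else 0 := by
    intro k hk
    rw [Finset.mem_Icc] at hk
    rw [dD_eval N α k hα1 hα2 hk.1 hk.2 t0 sbar s, ht0]
    split_ifs with h
    · rfl
    · rw [zero_mul, zero_div]
  rw [Finset.sum_congr rfl step, ← Finset.sum_filter]
  congr 1
  ext j
  simp only [Finset.mem_filter, Finset.mem_Icc]
  omega

/-- stabilization of the open D-type potential. For `4 ≤ N < M` and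
`1 ≤ α < N`, `∂F^o_{D_N}/∂t_α` under `t_{N-β} = s_β`, `t_N = s₋₁` equals
`∂F^o_{D_M}/∂t_α` under `t_{M-β} = s_β`, `t_M = s₋₁`, for all values of
`s₋₁, s_1, s_2, …` and `t_0 ≠ 0`. -/
theorem openD_stabilization (N M : ℕ) (hN : 4 ≤ N) (hNM : N < M)
    (α : ℕ) (hα1 : 1 ≤ α) (hα2 : α < N)
    (t0 sbar : ℝ) (ht0 : t0 ≠ 0) (s : ℕ → ℝ) :
    pd α (FD N) (ptD N t0 sbar s) = pd α (FD M) (ptD M t0 sbar s) := by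
  rw [pd_FD_stable N α hα1 hα2 t0 sbar s, pd_FD_stable M α hα1 (hα2.trans hNM) t0 sbar s]
end

section
/- Given a solution (F^c, F^o) of the open WDVV equations with flat metric η and unit ∂/∂t_1 (so that ∂_1∂_0 F^o = 1 and ∂_1∂_α F^o = 0 for α ≥ 1), the product on the (N+1)-dimensional space spanned by ∂/∂t_0, ..., ∂/∂t_N defined by ∂_α ∘ ∂_β = Σ_{γ,δ=1}^N (∂^3 F^c/∂t_α∂t_β∂t_γ) η^{γδ} ∂_δ + (∂^2 F^o/∂t_α∂t_β) ∂_0 for 0 ≤ α,β ≤ N (with third derivatives of F^c involving t_0 set to zero since F^c does not depend on t_0) is commutative and associative. -/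
/-- Structure constants of the open WDVV product. -/
noncomputable def openWDVV_T (N : ℕ) (c : ℕ → ℕ → ℕ → ℝ) (o η : ℕ → ℕ → ℝ)
    (a b dd : ℕ) : ℝ :=
  if dd = 0 then o a b else ∑ μ ∈ Finset.Icc 1 N, c a b μ * η μ dd

private lemma sum_rot3 (s : Finset ℕ) (f : ℕ → ℕ → ℕ → ℝ) :
    ∑ x ∈ s, ∑ y ∈ s, ∑ z ∈ s, f x y z = ∑ y ∈ s, ∑ z ∈ s, ∑ x ∈ s, f x y z := by
  rw [Finset.sum_comm]
  exact Finset.sum_congr rfl fun y _ => Finset.sum_comm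

private lemma sum_rev3 (s : Finset ℕ) (f : ℕ → ℕ → ℕ → ℝ) :
    ∑ x ∈ s, ∑ y ∈ s, ∑ z ∈ s, f x y z = ∑ z ∈ s, ∑ y ∈ s, ∑ x ∈ s, f x y z := by
  rw [sum_rot3, sum_rot3]
  exact Finset.sum_congr rfl fun z _ => Finset.sum_comm

private lemma sum_perm4 (s : Finset ℕ) (f : ℕ → ℕ → ℕ → ℕ → ℝ) :
    ∑ a ∈ s, ∑ b ∈ s, ∑ p ∈ s, ∑ q ∈ s, f a b p q
      = ∑ p ∈ s, ∑ q ∈ s, ∑ b ∈ s, ∑ a ∈ s, f a b p q := by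
  calc ∑ a ∈ s, ∑ b ∈ s, ∑ p ∈ s, ∑ q ∈ s, f a b p q
      = ∑ a ∈ s, ∑ p ∈ s, ∑ q ∈ s, ∑ b ∈ s, f a b p q :=
        Finset.sum_congr rfl fun a _ => sum_rot3 s _
    _ = ∑ p ∈ s, ∑ q ∈ s, ∑ a ∈ s, ∑ b ∈ s, f a b p q := sum_rot3 s _
    _ = ∑ p ∈ s, ∑ q ∈ s, ∑ b ∈ s, ∑ a ∈ s, f a b p q :=
        Finset.sum_congr rfl fun p _ => Finset.sum_congr rfl fun q _ => Finset.sum_comm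

private lemma assoc_core (n : ℕ) (T : ℕ → ℕ → ℕ → ℝ) (dd : ℕ)
    (hsym : ∀ a b e, T a b e = T b a e)
    (hkey : ∀ p q r, p < n → q < n → r < n →
      ∑ e ∈ Finset.range n, T p q e * T e r dd
        = ∑ e ∈ Finset.range n, T r q e * T e p dd)
    (x y z : ℕ → ℝ) :
    ∑ a ∈ Finset.range n, ∑ b ∈ Finset.range n,
        (∑ p ∈ Finset.range n, ∑ q ∈ Finset.range n, x p * y q * T p q a) * z b * T a b dd
      = ∑ a ∈ Finset.range n, ∑ b ∈ Finset.range n,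
          x a * (∑ p ∈ Finset.range n, ∑ q ∈ Finset.range n, y p * z q * T p q b) * T a b dd := by
  simp only [Finset.sum_mul, Finset.mul_sum]
  rw [sum_perm4]
  rw [show (∑ a ∈ Finset.range n, ∑ b ∈ Finset.range n, ∑ p ∈ Finset.range n,
        ∑ q ∈ Finset.range n, x a * (y p * z q * T p q b) * T a b dd)
      = ∑ a ∈ Finset.range n, ∑ p ∈ Finset.range n, ∑ q ∈ Finset.range n,
        ∑ b ∈ Finset.range n, x a * (y p * z q * T p q b) * T a b dd from
    Finset.sum_congr rfl fun a _ => sum_rot3 _ _]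
  refine Finset.sum_congr rfl fun i1 h1 => Finset.sum_congr rfl fun i2 h2 =>
    Finset.sum_congr rfl fun i3 h3 => ?_
  rw [Finset.mem_range] at h1 h2 h3
  calc ∑ a ∈ Finset.range n, x i1 * y i2 * T i1 i2 a * z i3 * T a i3 dd
      = x i1 * y i2 * z i3 * ∑ a ∈ Finset.range n, T i1 i2 a * T a i3 dd := by
        rw [Finset.mul_sum]; exact Finset.sum_congr rfl fun a _ => by ring
    _ = x i1 * y i2 * z i3 * ∑ e ∈ Finset.range n, T i3 i2 e * T e i1 dd := by
        rw [hkey i1 i2 i3 h1 h2 h3]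
    _ = ∑ b ∈ Finset.range n, x i1 * (y i2 * z i3 * T i2 i3 b) * T i1 b dd := by
        rw [Finset.mul_sum]
        refine Finset.sum_congr rfl fun e _ => ?_
        rw [hsym i3 i2 e, hsym e i1 dd]; ring

/-- given a solution `(F^c, F^o)` of the open WDVV equations, encoded
pointwise by its derivative tensors — `c a b g = ∂³F^c/∂t_a∂t_b∂t_g` (vanishing when
any index is `0`, since `F^c` does not depend on `t_0`), `o a b = ∂²F^o/∂t_a∂t_b`,
and the inverse metric `η` (supported on indices `1,…,N`, inverse to
`η_{ab} = ∂_1∂_a∂_b F^c`) — with flat unit `∂/∂t_1` (so `∂_1∂_0F^o = 1`,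
`∂_1∂_aF^o = 0` for `a ≥ 1`), the product
`∂_a ∘ ∂_b = ∑_{g,dd=1}^N c a b g η^{g,dd} ∂_dd + o a b ∂_0` on the span of
`∂_0,…,∂_N` is commutative and associative. -/
theorem open_WDVV_product_comm_assoc (N : ℕ) (hN : 1 ≤ N)
    (c : ℕ → ℕ → ℕ → ℝ) (o : ℕ → ℕ → ℝ) (η : ℕ → ℕ → ℝ)
    (hcsymm : ∀ a b g, c a b g = c b a g ∧ c a b g = c a g b)
    (hosymm : ∀ a b, o a b = o b a)
    (hηsymm : ∀ a b, η a b = η b a)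
    (hc0 : ∀ b g, c 0 b g = 0)
    (hη0 : ∀ b, η 0 b = 0)
    (hounit0 : o 1 0 = 1)
    (hounit : ∀ a, 1 ≤ a → o 1 a = 0)
    (hcunit : ∀ a b, 1 ≤ a → a ≤ N → 1 ≤ b → b ≤ N →
      ∑ μ ∈ Finset.Icc 1 N, c 1 a μ * η μ b = if a = b then 1 else 0)
    (hWDVV : ∀ a b g e, a ≤ N → b ≤ N → g ≤ N → e ≤ N →
      ∑ μ ∈ Finset.Icc 1 N, ∑ ν ∈ Finset.Icc 1 N, c a b μ * η μ ν * c ν g e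
        = ∑ μ ∈ Finset.Icc 1 N, ∑ ν ∈ Finset.Icc 1 N, c g b μ * η μ ν * c ν a e)
    (hopenWDVV : ∀ a b g, a ≤ N → b ≤ N → g ≤ N →
      (∑ μ ∈ Finset.Icc 1 N, ∑ ν ∈ Finset.Icc 1 N, c a b μ * η μ ν * o ν g)
          + o a b * o 0 g
        = (∑ μ ∈ Finset.Icc 1 N, ∑ ν ∈ Finset.Icc 1 N, c g b μ * η μ ν * o ν a)
          + o g b * o 0 a)
    (mul : (ℕ → ℝ) → (ℕ → ℝ) → (ℕ → ℝ))
    (hmul : ∀ x y dd, mul x y dd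
      = ∑ a ∈ Finset.range (N + 1), ∑ b ∈ Finset.range (N + 1),
          x a * y b * (if dd = 0 then o a b else ∑ μ ∈ Finset.Icc 1 N, c a b μ * η μ dd)) :
    (∀ x y dd, dd ≤ N → mul x y dd = mul y x dd) ∧
    (∀ x y z dd, dd ≤ N → mul (mul x y) z dd = mul x (mul y z) dd) := by
  set T : ℕ → ℕ → ℕ → ℝ := openWDVV_T N c o η with hTdef
  have hmul' : ∀ x y dd, mul x y dd
      = ∑ a ∈ Finset.range (N + 1), ∑ b ∈ Finset.range (N + 1), x a * y b * T a b dd := by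
    intro x y dd; rw [hmul]; rfl
  have hTsymm : ∀ a b e, T a b e = T b a e := by
    intro a b e
    simp only [hTdef, openWDVV_T]
    split
    · exact hosymm a b
    · exact Finset.sum_congr rfl fun μ _ => by rw [(hcsymm a b μ).1]
  have hT0 : ∀ a b, T a b 0 = o a b := by
    intro a b; simp [hTdef, openWDVV_T]
  have hTe : ∀ a b e, e ∈ Finset.Icc 1 N →
      T a b e = ∑ μ ∈ Finset.Icc 1 N, c a b μ * η μ e := by
    intro a b e he
    rw [Finset.mem_Icc] at he
    simp only [hTdef, openWDVV_T]
    rw [if_neg (by omega)]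
  have hrange : Finset.range (N + 1) = insert 0 (Finset.Icc 1 N) := by
    ext x; simp only [Finset.mem_range, Finset.mem_insert, Finset.mem_Icc]; omega
  -- the key structure-constant identity
  have key : ∀ p q r dd, p ≤ N → q ≤ N → r ≤ N →
      ∑ e ∈ Finset.range (N + 1), T p q e * T e r dd
        = ∑ e ∈ Finset.range (N + 1), T r q e * T e p dd := by
    intro p q r dd hp hq hr
    rw [hrange, Finset.sum_insert (by simp), Finset.sum_insert (by simp)]
    by_cases hdd : dd = 0
    · subst hdd
      have L : ∀ u w : ℕ, ∑ e ∈ Finset.Icc 1 N, T u q e * T e w 0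
          = ∑ μ ∈ Finset.Icc 1 N, ∑ e ∈ Finset.Icc 1 N, c u q μ * η μ e * o e w := by
        intro u w
        calc ∑ e ∈ Finset.Icc 1 N, T u q e * T e w 0
            = ∑ e ∈ Finset.Icc 1 N, (∑ μ ∈ Finset.Icc 1 N, c u q μ * η μ e) * o e w :=
              Finset.sum_congr rfl fun e he => by rw [hTe u q e he, hT0 e w]
          _ = ∑ e ∈ Finset.Icc 1 N, ∑ μ ∈ Finset.Icc 1 N, c u q μ * η μ e * o e w := by
              simp only [Finset.sum_mul]
          _ = ∑ μ ∈ Finset.Icc 1 N, ∑ e ∈ Finset.Icc 1 N, c u q μ * η μ e * o e w :=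
              Finset.sum_comm
      rw [L p r, L r p, hT0 p q, hT0 0 r, hT0 r q, hT0 0 p]
      linarith [hopenWDVV p q r hp hq hr]
    · have hTdd : ∀ a b, T a b dd = ∑ μ ∈ Finset.Icc 1 N, c a b μ * η μ dd := by
        intro a b; simp only [hTdef, openWDVV_T]; rw [if_neg hdd]
      have hT0' : ∀ g, T 0 g dd = 0 := by
        intro g; rw [hTdd]; simp [hc0]
      have L : ∀ u w : ℕ, ∑ e ∈ Finset.Icc 1 N, T u q e * T e w dd
          = ∑ ν ∈ Finset.Icc 1 N,
              (∑ μ ∈ Finset.Icc 1 N, ∑ e ∈ Finset.Icc 1 N, c u q μ * η μ e * c e w ν)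
                * η ν dd := by
        intro u w
        calc ∑ e ∈ Finset.Icc 1 N, T u q e * T e w dd
            = ∑ e ∈ Finset.Icc 1 N, (∑ μ ∈ Finset.Icc 1 N, c u q μ * η μ e)
                * (∑ ν ∈ Finset.Icc 1 N, c e w ν * η ν dd) :=
              Finset.sum_congr rfl fun e he => by rw [hTe u q e he, hTdd e w]
          _ = ∑ e ∈ Finset.Icc 1 N, ∑ ν ∈ Finset.Icc 1 N, ∑ μ ∈ Finset.Icc 1 N,
                c u q μ * η μ e * (c e w ν * η ν dd) := by
              simp only [Finset.sum_mul, Finset.mul_sum]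
          _ = ∑ ν ∈ Finset.Icc 1 N, ∑ μ ∈ Finset.Icc 1 N, ∑ e ∈ Finset.Icc 1 N,
                c u q μ * η μ e * (c e w ν * η ν dd) := sum_rot3 _ _
          _ = ∑ ν ∈ Finset.Icc 1 N,
                (∑ μ ∈ Finset.Icc 1 N, ∑ e ∈ Finset.Icc 1 N, c u q μ * η μ e * c e w ν)
                  * η ν dd := by
              simp only [Finset.sum_mul]
              refine Finset.sum_congr rfl fun ν _ => Finset.sum_congr rfl fun μ _ =>
                Finset.sum_congr rfl fun e _ => ?_
              ring
      rw [L p r, L r p, hT0' r, hT0' p, mul_zero, mul_zero]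
      refine congrArg₂ (· + ·) rfl (Finset.sum_congr rfl fun ν hν => ?_)
      rw [Finset.mem_Icc] at hν
      rw [hWDVV p q r ν hp hq hr hν.2]
  constructor
  · intro x y dd _
    rw [hmul' x y dd, hmul' y x dd, Finset.sum_comm]
    refine Finset.sum_congr rfl fun b _ => Finset.sum_congr rfl fun a _ => ?_
    rw [hTsymm a b dd]; ring
  · intro x y z dd _
    simp only [hmul']
    exact assoc_core (N + 1) T dd hTsymm
      (fun p q r hp hq hr => key p q r dd (by omega) (by omega) (by omega)) x y z
end

section
/- If (F^c, F^o) is a solution of the open WDVV equations with metric η and F^o additionally satisfies the quasihomogeneity condition guaranteeing ∂_α∂_β F^o = 0 for the relevant index range, then for the D-type system the compatibility identity Σ_{δ=1}^κ (∂^2 F^o/∂t_0∂t_{κ-δ})(∂^3 F^c/∂t_δ∂t_α∂t_β) = (∂^2 F^o/∂t_β∂t_0)(∂^2 F^o/∂t_0∂t_α) holds for all 2 ≤ α, β with α + β ≤ κ and α, β ≠ κ, where η^{αβ} = δ^{α+β,κ} for α,β < κ and η^{κκ} = 1. -/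
/-- The index pairing of the type `D_κ` metric `η^{ab} = δ^{a+b,κ}` (for `a,b < κ`),
`η^{κκ} = 1`: the index dual to `δ` is `κ - δ` for `δ < κ` and `κ` itself for `δ = κ`. -/
def dbar (κ δ : ℕ) : ℕ := if δ = κ then κ else κ - δ

/-- D-type compatibility identity.  Encode the derivative tensors of
the `D_κ` pair `(F^c, F^o)` pointwise: `c a b g = ∂³F^c/∂t_a∂t_b∂t_g` (zero if any
index is `0`), `o a b = ∂²F^o/∂t_a∂t_b`.  Assume the open WDVV equation (with third
index `0`) for the metric `η^{ab} = δ^{a+b,κ}` (`a,b < κ`), `η^{κκ} = 1`, and the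
vanishing `∂_a∂_b F^o = 0` for `2 ≤ a,b`, `a+b ≤ κ`, `a,b ≠ κ` guaranteed by
quasihomogeneity.  Then for all `2 ≤ α,β` with `α+β ≤ κ` and `α,β ≠ κ`:
`∑_{δ=1}^κ (∂²F^o/∂t_0∂t_{δ̄})(∂³F^c/∂t_δ∂t_α∂t_β) = (∂²F^o/∂t_β∂t_0)(∂²F^o/∂t_0∂t_α)`. -/
theorem D_type_compatibility (κ : ℕ) (hκ : 4 ≤ κ)
    (c : ℕ → ℕ → ℕ → ℝ) (o : ℕ → ℕ → ℝ)
    (hcsymm : ∀ a b g, c a b g = c b a g ∧ c a b g = c a g b)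
    (hosymm : ∀ a b, o a b = o b a)
    (hc0 : ∀ b g, c 0 b g = 0)
    (hopenWDVV : ∀ a b g, a ≤ κ → b ≤ κ → g ≤ κ →
      (∑ μ ∈ Finset.Icc 1 κ, c a b μ * o (dbar κ μ) g) + o a b * o 0 g
        = (∑ μ ∈ Finset.Icc 1 κ, c g b μ * o (dbar κ μ) a) + o g b * o 0 a)
    (hvanish : ∀ a b, 2 ≤ a → 2 ≤ b → a + b ≤ κ → a ≠ κ → b ≠ κ → o a b = 0) :
    ∀ α β, 2 ≤ α → 2 ≤ β → α + β ≤ κ → α ≠ κ → β ≠ κ →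
      ∑ δ ∈ Finset.Icc 1 κ, o 0 (dbar κ δ) * c δ α β = o β 0 * o 0 α := by
  intro α β hα hβ hαβ hακ hβκ
  have hαle : α ≤ κ := le_trans (Nat.le_add_right _ _) hαβ
  have hβle : β ≤ κ := le_trans (Nat.le_add_left _ _) hαβ
  have h := hopenWDVV α β 0 hαle hβle (Nat.zero_le κ)
  rw [hvanish α β hα hβ hαβ hακ hβκ] at h
  simp only [hc0, zero_mul, Finset.sum_const_zero, zero_add, zero_mul, add_zero] at h
  calc ∑ δ ∈ Finset.Icc 1 κ, o 0 (dbar κ δ) * c δ α β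
      = ∑ δ ∈ Finset.Icc 1 κ, c α β δ * o (dbar κ δ) 0 := by
        apply Finset.sum_congr rfl; intro δ _
        rw [hosymm, (hcsymm δ α β).1, (hcsymm α δ β).2]; ring
    _ = o 0 β * o 0 α := h
    _ = o β 0 * o 0 α := by rw [hosymm]
end
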